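/- For a balanced n-colored partition λ̄ (same number of boxes of each color), the sign (−1)^{Σ_i ht(ν_i)} obtained from any decomposition of λ̄ into a sequence of n-border strips (ν_1, ..., ν_{|λ̄|/n}) successively removed from λ̄ is independent of the choice of border strip decomposition. -/

import Mathlib

/-- A partition: a non-increasing, eventually-zero sequence of non-negative integers. -/
structure Ptn where
  f : ℕ → ℕ
  anti : ∀ i, f (i + 1) ≤ f i
  ev : ∃ N, ∀ i, N ≤ i → f i = 0

/-- The size `|ρ|` of a partition: the number of boxes. -/
noncomputable def Ptn.size (ρ : Ptn) : ℕ := ∑ᶠ i, ρ.f i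

/-- The set `S(ρ) = {ρ_i - (i+1) : i ≥ 0} ⊆ ℤ`. -/
def Ptn.S (ρ : Ptn) : Set ℤ := {t | ∃ i : ℕ, t = (ρ.f i : ℤ) - (i + 1)}

/-- The conjugate partition: `ρ'_j = #{i : ρ_i > j}`. -/
noncomputable def Ptn.conj (ρ : Ptn) (j : ℕ) : ℕ := Set.ncard {i : ℕ | j < ρ.f i}

/-- The interlacing relation `τ ≻ σ`: `τ_0 ≥ σ_0 ≥ τ_1 ≥ σ_1 ≥ ...`. -/
def Interlace (τ σ : Ptn) : Prop := ∀ i, σ.f i ≤ τ.f i ∧ τ.f (i + 1) ≤ σ.f i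

/-- The set of boxes of a partition (row, column), 0-indexed. -/
def Ptn.cells (ρ : Ptn) : Set (ℕ × ℕ) := {p | p.2 < ρ.f p.1}

/-- The interlaced-slope-sequence condition: `Λ̄(t) = λ_{t mod n}((t - t mod n)/n)`,
i.e. `(λ_0, ..., λ_{n-1})` is the `n`-quotient of `Λ`. -/
def SlopeQuot (n : ℕ) (lam : ℕ → Ptn) (Λ : Ptn) : Prop :=
  ∀ t : ℤ, t ∈ Λ.S ↔ t.ediv n ∈ (lam (t.emod n).toNat).S

/-- The number of boxes of `Λ` of color `c`, where box `(i,j)` has color `(j - i) mod n`. -/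
noncomputable def colorCount (n : ℕ) (Λ : Ptn) (c : ℤ) : ℕ :=
  ∑ᶠ i : ℕ, ((Finset.range (Λ.f i)).filter (fun j : ℕ => ((j : ℤ) - (i : ℤ)).emod n = c)).card

/-- `Λ` is balanced: it has the same number of boxes of each color mod `n`. -/
def BalancedPtn (n : ℕ) (Λ : Ptn) : Prop :=
  ∀ c c' : ℤ, colorCount n Λ c = colorCount n Λ c'

/-- Two boxes are adjacent if they share an edge. -/
def Adj (a b : ℕ × ℕ) : Prop :=
  (a.1 = b.1 ∧ (a.2 + 1 = b.2 ∨ b.2 + 1 = a.2)) ∨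
  (a.2 = b.2 ∧ (a.1 + 1 = b.1 ∨ b.1 + 1 = a.1))

/-- A set of boxes is connected (via edge-adjacency, through the set). -/
def ConnectedBoxes (D : Set (ℕ × ℕ)) : Prop :=
  ∀ a ∈ D, ∀ b ∈ D, Relation.ReflTransGen (fun x y => y ∈ D ∧ Adj x y) a b

/-- A set of boxes contains no 2×2 square. -/
def No2x2 (D : Set (ℕ × ℕ)) : Prop :=
  ¬ ∃ r s : ℕ, (r, s) ∈ D ∧ (r + 1, s) ∈ D ∧ (r, s + 1) ∈ D ∧ (r + 1, s + 1) ∈ D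

/-- A border strip with `n` boxes: a finite connected set of `n` boxes with no 2×2 square. -/
def IsBorderStrip (n : ℕ) (D : Set (ℕ × ℕ)) : Prop :=
  D.Finite ∧ D.ncard = n ∧ ConnectedBoxes D ∧ No2x2 D

/-- The height of a strip: the number of rows it occupies, minus one. -/
noncomputable def htS (D : Set (ℕ × ℕ)) : ℕ := Set.ncard {r | ∃ s, (r, s) ∈ D} - 1

/-- A decomposition of `Λ` into `m` successively removed `n`-border strips:
`Λ = c 0 ⊇ c 1 ⊇ ... ⊇ c m = ∅` with each consecutive difference an `n`-border strip. -/
def StripDecomp (n : ℕ) (Λ : Ptn) (m : ℕ) (c : ℕ → Ptn) : Prop :=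
  c 0 = Λ ∧ (∀ i, (c m).f i = 0) ∧
  ∀ t, t < m → (c (t + 1)).cells ⊆ (c t).cells ∧
    IsBorderStrip n ((c t).cells \ (c (t + 1)).cells)


namespace SP


def rnkSet (n : ℕ) (S : Set ℤ) (x : ℤ) : Set ℤ := {y | y ∈ S ∧ x < y ∧ (n:ℤ) ∣ (y - x)}

noncomputable def Phi (n : ℕ) (S : Set ℤ) (x : ℤ) : ℤ :=
  x.emod n - n - n * ((rnkSet n S x).ncard : ℤ)

def InvS (n : ℕ) (S : Set ℤ) : Set (ℤ × ℤ) :=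
  {p | p.1 ∈ S ∧ p.2 ∈ S ∧ p.2 < p.1 ∧ Phi n S p.1 < Phi n S p.2}

def DeepId (n : ℕ) (S : Set ℤ) : Prop := ∃ B : ℤ, ∀ x : ℤ, x < B → (x ∈ S ∧ Phi n S x = x)

def UpFin (S : Set ℤ) : Prop := ∀ x : ℤ, {y | y ∈ S ∧ x < y}.Finite

lemma rnkSet_finite {n : ℕ} {S : Set ℤ} (hS : UpFin S) (x : ℤ) : (rnkSet n S x).Finite :=
  (hS x).subset (fun y hy => ⟨hy.1, hy.2.1⟩)

/-- Phi is strictly decreasing on same-residue elements of S, hence injective-ish. -/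
lemma phi_lt_of_dvd {n : ℕ} (hn : 0 < n) {S : Set ℤ} (hS : UpFin S) {x y : ℤ}
    (hx : x ∈ S) (hyx : y < x) (hdvd : (n:ℤ) ∣ (x - y)) :
    Phi n S y < Phi n S x := by
  have hsub : insert x (rnkSet n S x) ⊆ rnkSet n S y := by
    rintro z (rfl | hz)
    · exact ⟨hx, hyx, hdvd⟩
    · refine ⟨hz.1, lt_trans hyx hz.2.1, ?_⟩
      have := hz.2.2
      have : (n:ℤ) ∣ (z - x) + (x - y) := dvd_add this hdvd
      simpa using this
  have hxnot : x ∉ rnkSet n S x := fun h => absurd h.2.1 (lt_irrefl x)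
  have hfx : (rnkSet n S x).Finite := rnkSet_finite hS x
  have hfy : (rnkSet n S y).Finite := rnkSet_finite hS y
  have hcard : (rnkSet n S x).ncard + 1 ≤ (rnkSet n S y).ncard := by
    have h1 : (insert x (rnkSet n S x)).ncard = (rnkSet n S x).ncard + 1 :=
      Set.ncard_insert_of_notMem hxnot hfx
    have h2 : (insert x (rnkSet n S x)).ncard ≤ (rnkSet n S y).ncard :=
      Set.ncard_le_ncard hsub hfy
    omega
  have hemod : x.emod n = y.emod n := by
    show x % (n:ℤ) = y % (n:ℤ)
    rw [Int.emod_eq_emod_iff_emod_sub_eq_zero]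
    exact Int.emod_eq_zero_of_dvd hdvd
  unfold Phi
  rw [hemod]
  have hle : ((rnkSet n S x).ncard : ℤ) + 1 ≤ ((rnkSet n S y).ncard : ℤ) := by exact_mod_cast hcard
  have hn' : (0:ℤ) < n := by exact_mod_cast hn
  have : (n:ℤ) * ((rnkSet n S x).ncard : ℤ) + n * 1 ≤ n * ((rnkSet n S y).ncard : ℤ) := by
    rw [← mul_add]
    exact mul_le_mul_of_nonneg_left hle (le_of_lt hn')
  omega

lemma phi_ne_aux {n : ℕ} (hn : 0 < n) {S : Set ℤ} (hS : UpFin S) {x y : ℤ}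
    (hx : x ∈ S) (hyx : y < x) : Phi n S x ≠ Phi n S y := by
  by_cases hdvd : (n:ℤ) ∣ (x - y)
  · exact (ne_of_lt (phi_lt_of_dvd hn hS hx hyx hdvd)).symm
  · intro heq
    have hr : x.emod n ≠ y.emod n := by
      intro hr
      apply hdvd
      have : (x - y) % (n:ℤ) = 0 := by
        rw [← Int.emod_eq_emod_iff_emod_sub_eq_zero]
        exact hr
      exact Int.dvd_of_emod_eq_zero this
    unfold Phi at heq
    have h1 : x.emod n - y.emod n = n * (((rnkSet n S x).ncard : ℤ) - (rnkSet n S y).ncard) := by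
      ring_nf; ring_nf at heq; omega
    have hn' : (0:ℤ) < n := by exact_mod_cast hn
    have hb1 : 0 ≤ x.emod n := Int.emod_nonneg x (by omega)
    have hb2 : x.emod n < n := Int.emod_lt_of_pos x hn'
    have hb3 : 0 ≤ y.emod n := Int.emod_nonneg y (by omega)
    have hb4 : y.emod n < n := Int.emod_lt_of_pos y hn'
    set d : ℤ := ((rnkSet n S x).ncard : ℤ) - (rnkSet n S y).ncard with hd
    have hd0 : d ≠ 0 := by
      intro h0
      rw [h0, mul_zero] at h1
      omega
    rcases lt_or_gt_of_ne hd0 with hdlt | hdgt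
    · have : (n:ℤ) * d ≤ n * (-1) := mul_le_mul_of_nonneg_left (by omega) (le_of_lt hn')
      omega
    · have : (n:ℤ) * 1 ≤ n * d := mul_le_mul_of_nonneg_left (by omega) (le_of_lt hn')
      omega

lemma phi_ne {n : ℕ} (hn : 0 < n) {S : Set ℤ} (hS : UpFin S) {x y : ℤ}
    (hx : x ∈ S) (hy : y ∈ S) (hxy : x ≠ y) : Phi n S x ≠ Phi n S y := by
  rcases lt_or_gt_of_ne hxy with h | h
  · exact (phi_ne_aux hn hS hy h).symm
  · exact phi_ne_aux hn hS hx h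

section Move

variable {n : ℕ} {S S' : Set ℤ} {s : ℤ}

lemma upFin_move (hS' : S' = insert (s - n) (S \ {s})) (hUF : UpFin S) : UpFin S' := by
  intro x
  apply Set.Finite.subset ((hUF x).insert (s - n))
  rintro y ⟨hy1, hy2⟩
  rw [hS'] at hy1
  rcases hy1 with rfl | ⟨hy1, _⟩
  · exact Set.mem_insert _ _
  · exact Set.mem_insert_of_mem _ ⟨hy1, hy2⟩

lemma mem_move (hsn : s - n ∉ S) (hS' : S' = insert (s - n) (S \ {s}))
    {y : ℤ} (h1 : y ≠ s) (h2 : y ≠ s - n) : (y ∈ S' ↔ y ∈ S) := by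
  rw [hS']
  constructor
  · rintro (rfl | ⟨h, _⟩)
    · exact absurd rfl h2
    · exact h
  · intro h
    exact Set.mem_insert_of_mem _ ⟨h, h1⟩

lemma not_dvd_sub_of_between (hn : 0 < n) {y : ℤ} (h1 : s - n < y) (h2 : y < s) :
    ¬ ((n:ℤ) ∣ (s - y)) := by
  intro hdvd
  have hpos : 0 < s - y := by omega
  have := Int.le_of_dvd hpos hdvd
  omega

lemma rnk_move (hn : 0 < n) (hUF : UpFin S) (hs : s ∈ S) (hsn : s - n ∉ S)
    (hS' : S' = insert (s - n) (S \ {s})) {y : ℤ} (hy : y ∈ S) (hys : y ≠ s) :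
    (rnkSet n S' y).ncard = (rnkSet n S y).ncard := by
  by_cases hdvd : (n:ℤ) ∣ (s - y)
  · have hy2 : y ≠ s - n := fun h => hsn (h ▸ hy)
    have hcase : y < s - n ∨ s < y := by
      rcases lt_trichotomy y (s - n) with h | h | h
      · exact Or.inl h
      · exact absurd h hy2
      · rcases lt_trichotomy y s with h' | h' | h'
        · exact absurd hdvd (not_dvd_sub_of_between hn h h')
        · exact absurd h' hys
        · exact Or.inr h'
    rcases hcase with hlt | hgt
    · -- y < s - n : set is insert (s-n) (rnkSet n S y \ {s})
      have hset : rnkSet n S' y = insert (s - n) (rnkSet n S y \ {s}) := by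
        ext z
        constructor
        · rintro ⟨hz1, hz2, hz3⟩
          rw [hS'] at hz1
          rcases hz1 with rfl | ⟨hz1, hz1'⟩
          · exact Set.mem_insert _ _
          · exact Set.mem_insert_of_mem _ ⟨⟨hz1, hz2, hz3⟩, hz1'⟩
        · rintro (rfl | ⟨⟨hz1, hz2, hz3⟩, hz4⟩)
          · refine ⟨by rw [hS']; exact Set.mem_insert _ _, hlt, ?_⟩
            have : (n:ℤ) ∣ (s - y) - n := by
              exact dvd_sub hdvd dvd_rfl
            convert this using 1
            ring
          · exact ⟨by rw [hS']; exact Set.mem_insert_of_mem _ ⟨hz1, hz4⟩, hz2, hz3⟩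
      rw [hset]
      have hfin : (rnkSet n S y).Finite := rnkSet_finite hUF y
      have hsmem : s ∈ rnkSet n S y := ⟨hs, by omega, hdvd⟩
      have hsn_not : s - n ∉ rnkSet n S y \ {s} := by
        rintro ⟨⟨h, _, _⟩, _⟩
        exact hsn h
      rw [Set.ncard_insert_of_notMem hsn_not hfin.diff]
      rw [Set.ncard_diff_singleton_of_mem hsmem]
      have : 0 < (rnkSet n S y).ncard := (Set.ncard_pos hfin).mpr ⟨s, hsmem⟩
      omega
    · -- s < y : sets are equal
      congr 1
      ext z
      have key : ∀ w ∈ rnkSet n S' y ∪ rnkSet n S y, w ≠ s ∧ w ≠ s - n := by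
        rintro w (⟨_, hw, _⟩ | ⟨_, hw, _⟩) <;> constructor <;> omega
      constructor
      · rintro hz
        obtain ⟨h1, h2⟩ := key z (Or.inl hz)
        exact ⟨(mem_move hsn hS' h1 h2).mp hz.1, hz.2⟩
      · rintro hz
        obtain ⟨h1, h2⟩ := key z (Or.inr hz)
        exact ⟨(mem_move hsn hS' h1 h2).mpr hz.1, hz.2⟩
  · congr 1
    ext z
    have key : ∀ w, (n:ℤ) ∣ (w - y) → w ≠ s ∧ w ≠ s - n := by
      intro w hw
      constructor
      · rintro rfl; exact hdvd hw
      · rintro rfl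
        apply hdvd
        have : (n:ℤ) ∣ (s - n - y) + n := dvd_add hw dvd_rfl
        convert this using 1; ring
    constructor
    · rintro ⟨hz1, hz2, hz3⟩
      obtain ⟨h1, h2⟩ := key z hz3
      exact ⟨(mem_move hsn hS' h1 h2).mp hz1, hz2, hz3⟩
    · rintro ⟨hz1, hz2, hz3⟩
      obtain ⟨h1, h2⟩ := key z hz3
      exact ⟨(mem_move hsn hS' h1 h2).mpr hz1, hz2, hz3⟩

lemma s_not_mem_move (hn : 0 < n) (hS' : S' = insert (s - n) (S \ {s})) : s ∉ S' := by
  rw [hS']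
  rintro (h | ⟨_, h⟩)
  · have : (0:ℤ) < n := by exact_mod_cast hn
    omega
  · exact h rfl

lemma rnk_move_s (hn : 0 < n) (hs : s ∈ S) (hsn : s - n ∉ S)
    (hS' : S' = insert (s - n) (S \ {s})) :
    rnkSet n S' (s - n) = rnkSet n S s := by
  ext z
  constructor
  · rintro ⟨hz1, hz2, hz3⟩
    have hzs : z ≠ s - n := by omega
    have hzdvd : (n:ℤ) ∣ (z - s) := by
      have : (n:ℤ) ∣ (z - (s - n)) - n := dvd_sub hz3 dvd_rfl
      convert this using 1; ring
    have hzS : z ≠ s := by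
      rintro rfl
      exact s_not_mem_move hn hS' hz1
    have hzgt : s < z := by
      rcases lt_trichotomy z s with h | h | h
      · exfalso
        apply not_dvd_sub_of_between hn hz2 h
        have := dvd_neg.mpr hzdvd
        rw [show s - z = -(z - s) by ring]; exact Int.dvd_neg.mpr hzdvd
      · exact absurd h hzS
      · exact h
    exact ⟨(mem_move hsn hS' hzS hzs).mp hz1, hzgt, hzdvd⟩
  · rintro ⟨hz1, hz2, hz3⟩
    have hzS : z ≠ s := by omega
    have hzs : z ≠ s - n := fun h => hsn (h ▸ hz1)
    have hnpos : (0:ℤ) < n := by exact_mod_cast hn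
    refine ⟨(mem_move hsn hS' hzS hzs).mpr hz1, by omega, ?_⟩
    have : (n:ℤ) ∣ (z - s) + n := dvd_add hz3 dvd_rfl
    convert this using 1; ring

lemma phi_move (hn : 0 < n) (hUF : UpFin S) (hs : s ∈ S) (hsn : s - n ∉ S)
    (hS' : S' = insert (s - n) (S \ {s})) {y : ℤ} (hy : y ∈ S) (hys : y ≠ s) :
    Phi n S' y = Phi n S y := by
  unfold Phi
  rw [rnk_move hn hUF hs hsn hS' hy hys]

lemma phi_move_s (hn : 0 < n) (hs : s ∈ S) (hsn : s - n ∉ S)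
    (hS' : S' = insert (s - n) (S \ {s})) :
    Phi n S' (s - n) = Phi n S s := by
  unfold Phi
  rw [rnk_move_s hn hs hsn hS']
  congr 1
  show (s - (n:ℤ)) % (n:ℤ) - n = s % (n:ℤ) - n
  rw [Int.sub_emod]
  simp

def pSet (n : ℕ) (S : Set ℤ) (s : ℤ) : Set ℤ :=
  {y | y ∈ S ∧ y ≠ s ∧ ((y < s ∧ Phi n S s < Phi n S y) ∨ (s < y ∧ Phi n S y < Phi n S s))}

lemma inv_finite {n : ℕ} {S : Set ℤ} (hUF : UpFin S) (hdeep : DeepId n S) :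
    (InvS n S).Finite := by
  obtain ⟨B, hB⟩ := hdeep
  have hA : {y | y ∈ S ∧ B - 1 < y}.Finite := hUF (B - 1)
  apply Set.Finite.subset
    (Set.Finite.biUnion hA (fun x _ =>
      ((hUF (min B (Phi n S x) - 1)).image (fun y => (x, y)))))
  rintro ⟨x, y⟩ ⟨hx, hy, hlt, hphi⟩
  dsimp only at hx hy hlt hphi
  have hxA : x ∈ {y | y ∈ S ∧ B - 1 < y} := by
    refine ⟨hx, ?_⟩
    by_contra h
    have hxB : x < B := by omega
    have hyB : y < B := by omega
    have h1 := (hB x hxB).2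
    have h2 := (hB y hyB).2
    omega
  refine Set.mem_biUnion hxA ?_
  refine ⟨y, ⟨hy, ?_⟩, rfl⟩
  rcases lt_or_ge y B with h | h
  · have := (hB y h).2
    have : Phi n S x < y := by omega
    omega
  · omega

lemma inv_decomp {n : ℕ} (hn : 0 < n) {S : Set ℤ} (hUF : UpFin S)
    (hfin : (InvS n S).Finite) {s : ℤ} (hs : s ∈ S) :
    (pSet n S s).Finite ∧ (InvS n S).ncard
      = {q ∈ InvS n S | q.1 ≠ s ∧ q.2 ≠ s}.ncard + (pSet n S s).ncard := by
  classical
  set g : ℤ → ℤ × ℤ := fun y => if y < s then (s, y) else (y, s) with hg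
  have himg : g '' (pSet n S s) ⊆ InvS n S := by
    rintro q ⟨y, ⟨hyS, hys, hcond⟩, rfl⟩
    rcases hcond with ⟨h1, h2⟩ | ⟨h1, h2⟩
    · simp only [hg, if_pos h1]
      exact ⟨hs, hyS, h1, h2⟩
    · simp only [hg, if_neg (by omega : ¬ y < s)]
      exact ⟨hyS, hs, h1, h2⟩
  have hcover : InvS n S = {q ∈ InvS n S | q.1 ≠ s ∧ q.2 ≠ s} ∪ g '' (pSet n S s) := by
    ext ⟨x, y⟩
    constructor
    · intro hq
      obtain ⟨hx, hy, hlt, hphi⟩ := hq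
      dsimp only at hx hy hlt hphi
      by_cases h1 : x = s
      · refine Or.inr ⟨y, ⟨hy, by omega, Or.inl ⟨by omega, by rw [← h1]; exact hphi⟩⟩, ?_⟩
        simp only [hg]
        rw [if_pos (by omega : y < s), h1]
      · by_cases h2 : y = s
        · refine Or.inr ⟨x, ⟨hx, by omega, Or.inr ⟨by omega, by rw [← h2]; exact hphi⟩⟩, ?_⟩
          simp only [hg]
          rw [if_neg (by omega : ¬ x < s), h2]
        · exact Or.inl ⟨⟨hx, hy, hlt, hphi⟩, h1, h2⟩
    · rintro (⟨hq, _⟩ | hq)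
      · exact hq
      · exact himg hq
  have hdisj : Disjoint {q ∈ InvS n S | q.1 ≠ s ∧ q.2 ≠ s} (g '' (pSet n S s)) := by
    rw [Set.disjoint_left]
    rintro q ⟨_, hq1, hq2⟩ ⟨y, hy, rfl⟩
    by_cases h : y < s
    · simp [hg, if_pos h] at hq1
    · simp [hg, if_neg h] at hq2
  have hinj : Set.InjOn g (pSet n S s) := by
    rintro y₁ ⟨_, hy₁, _⟩ y₂ ⟨_, hy₂, _⟩ heq
    by_cases h1 : y₁ < s <;> by_cases h2 : y₂ < s <;>
      simp [hg, h1, h2, Prod.ext_iff] at heq <;> omega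
  have hf1 : {q ∈ InvS n S | q.1 ≠ s ∧ q.2 ≠ s}.Finite :=
    hfin.subset (fun q hq => hq.1)
  have hf2 : (g '' (pSet n S s)).Finite := hfin.subset himg
  refine ⟨Set.Finite.of_finite_image hf2 hinj, ?_⟩
  conv_lhs => rw [hcover]
  rw [Set.ncard_union_eq hdisj hf1 hf2, Set.ncard_image_of_injOn hinj]

lemma inv0_eq {n : ℕ} (hn : 0 < n) (hUF : UpFin S) (hs : s ∈ S) (hsn : s - n ∉ S)
    (hS' : S' = insert (s - n) (S \ {s})) :
    {q ∈ InvS n S | q.1 ≠ s ∧ q.2 ≠ s} = {q ∈ InvS n S' | q.1 ≠ s - n ∧ q.2 ≠ s - n} := by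
  ext ⟨x, y⟩
  constructor
  · rintro ⟨⟨hx, hy, hlt, hphi⟩, h1, h2⟩
    dsimp only at hx hy hlt hphi h1 h2
    have hx2 : x ≠ s - n := fun h => hsn (h ▸ hx)
    have hy2 : y ≠ s - n := fun h => hsn (h ▸ hy)
    refine ⟨⟨(mem_move hsn hS' h1 hx2).mpr hx, (mem_move hsn hS' h2 hy2).mpr hy, hlt, ?_⟩, hx2, hy2⟩
    rw [phi_move hn hUF hs hsn hS' hx h1, phi_move hn hUF hs hsn hS' hy h2]
    exact hphi
  · rintro ⟨⟨hx, hy, hlt, hphi⟩, h1, h2⟩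
    dsimp only at hx hy hlt hphi h1 h2
    have hx2 : x ≠ s := fun h => s_not_mem_move hn hS' (h ▸ hx)
    have hy2 : y ≠ s := fun h => s_not_mem_move hn hS' (h ▸ hy)
    have hxS : x ∈ S := (mem_move hsn hS' hx2 h1).mp hx
    have hyS : y ∈ S := (mem_move hsn hS' hy2 h2).mp hy
    refine ⟨⟨hxS, hyS, hlt, ?_⟩, hx2, hy2⟩
    rw [← phi_move hn hUF hs hsn hS' hxS hx2, ← phi_move hn hUF hs hsn hS' hyS hy2]
    exact hphi

lemma p_move {n : ℕ} (hn : 0 < n) (hUF : UpFin S) (hs : s ∈ S) (hsn : s - n ∉ S)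
    (hS' : S' = insert (s - n) (S \ {s})) :
    pSet n S' (s - n) = (pSet n S s \ {y | y ∈ S ∧ s - n < y ∧ y < s})
      ∪ ({y | y ∈ S ∧ s - n < y ∧ y < s} \ pSet n S s) := by
  have hnpos : (0:ℤ) < n := by exact_mod_cast hn
  ext y
  constructor
  · rintro ⟨hyS', hyne, hcond⟩
    have hymem : y ∈ S \ {s} := by
      rw [hS'] at hyS'
      rcases hyS' with rfl | h
      · exact absurd rfl hyne
      · exact h
    obtain ⟨hyS, hys⟩ := hymem
    have hys : y ≠ s := hys
    rw [phi_move hn hUF hs hsn hS' hyS hys, phi_move_s hn hs hsn hS'] at hcond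
    have hne := phi_ne hn hUF hyS hs hys
    rcases hcond with ⟨h1, h2⟩ | ⟨h1, h2⟩
    · exact Or.inl ⟨⟨hyS, hys, Or.inl ⟨by omega, h2⟩⟩, fun hT => by have := hT.2.1; omega⟩
    · rcases lt_trichotomy y s with h3 | h3 | h3
      · refine Or.inr ⟨⟨hyS, h1, h3⟩, ?_⟩
        rintro ⟨_, _, (⟨_, h4⟩ | ⟨h4, _⟩)⟩ <;> omega
      · exact absurd h3 hys
      · exact Or.inl ⟨⟨hyS, hys, Or.inr ⟨h3, h2⟩⟩, fun hT => by have := hT.2.2; omega⟩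
  · have hphis := phi_move_s hn hs hsn hS'
    rintro (⟨⟨hyS, hys, hcond⟩, hyT⟩ | ⟨⟨hyS, hT1, hT2⟩, hyp⟩)
    · have hy2 : y ≠ s - n := fun h => hsn (h ▸ hyS)
      refine ⟨(mem_move hsn hS' hys hy2).mpr hyS, hy2, ?_⟩
      rw [phi_move hn hUF hs hsn hS' hyS hys, hphis]
      rcases hcond with ⟨h1, h2⟩ | ⟨h1, h2⟩
      · have : ¬ (s - (n:ℤ) < y) := fun h => hyT ⟨hyS, h, h1⟩
        exact Or.inl ⟨by omega, h2⟩
      · exact Or.inr ⟨by omega, h2⟩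
    · have hys : y ≠ s := by omega
      have hy2 : y ≠ s - n := fun h => hsn (h ▸ hyS)
      refine ⟨(mem_move hsn hS' hys hy2).mpr hyS, hy2, ?_⟩
      rw [phi_move hn hUF hs hsn hS' hyS hys, hphis]
      have hne := phi_ne hn hUF hyS hs hys
      have hnot : ¬ (Phi n S s < Phi n S y) := by
        intro h
        exact hyp ⟨hyS, hys, Or.inl ⟨hT2, h⟩⟩
      exact Or.inr ⟨hT1, by omega⟩

lemma sd_card {A B : Set ℤ} (hA : A.Finite) (hB : B.Finite) :
    ((A \ B) ∪ (B \ A)).ncard + 2 * (A ∩ B).ncard = A.ncard + B.ncard := by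
  have hd : Disjoint (A \ B) (B \ A) := by
    rw [Set.disjoint_left]
    rintro x ⟨_, h1⟩ ⟨_, _⟩
    exact h1 ‹x ∈ B›
  rw [Set.ncard_union_eq hd hA.diff hB.diff]
  have h1 : (A ∩ B).ncard + (A \ B).ncard = A.ncard := by
    rw [← Set.ncard_inter_add_ncard_diff_eq_ncard A B hA]
  have h2 : (B ∩ A).ncard + (B \ A).ncard = B.ncard := by
    rw [← Set.ncard_inter_add_ncard_diff_eq_ncard B A hB]
  rw [Set.inter_comm B A] at h2
  omega

lemma neg_one_pow_add_two_mul (a k : ℕ) : ((-1 : ℤ)) ^ (a + 2 * k) = (-1) ^ a := by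
  rw [pow_add, pow_mul]
  norm_num

lemma move_parity {n : ℕ} (hn : 0 < n) (hUF : UpFin S)
    (hdeep' : DeepId n S') (hs : s ∈ S) (hsn : s - n ∉ S)
    (hS' : S' = insert (s - n) (S \ {s})) :
    DeepId n S ∧ ((-1:ℤ) ^ (InvS n S).ncard
      = (-1) ^ ((InvS n S').ncard + {y | y ∈ S ∧ s - n < y ∧ y < s}.ncard)) := by
  have hnpos : (0:ℤ) < n := by exact_mod_cast hn
  have hUF' : UpFin S' := upFin_move hS' hUF
  have hdeep : DeepId n S := by
    obtain ⟨B', hB'⟩ := hdeep'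
    refine ⟨min B' (s - n), fun x hx => ?_⟩
    have hx1 : x < B' := lt_of_lt_of_le hx (min_le_left _ _)
    have hx2 : x < s - n := lt_of_lt_of_le hx (min_le_right _ _)
    obtain ⟨hxS', hxphi⟩ := hB' x hx1
    have hxne1 : x ≠ s := by omega
    have hxne2 : x ≠ s - n := by omega
    have hxS : x ∈ S := (mem_move hsn hS' hxne1 hxne2).mp hxS'
    refine ⟨hxS, ?_⟩
    rw [← phi_move hn hUF hs hsn hS' hxS hxne1]
    exact hxphi
  have hfin : (InvS n S).Finite := inv_finite hUF hdeep
  have hfin' : (InvS n S').Finite := inv_finite hUF' hdeep'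
  have hsmem' : s - (n:ℤ) ∈ S' := by rw [hS']; exact Set.mem_insert _ _
  obtain ⟨hpfin, d1⟩ := inv_decomp hn hUF hfin hs
  obtain ⟨hpfin', d2⟩ := inv_decomp hn hUF' hfin' hsmem'
  have hi0 := inv0_eq hn hUF hs hsn hS'
  rw [hi0] at d1
  set T := {y | y ∈ S ∧ s - (n:ℤ) < y ∧ y < s} with hT
  have hTfin : T.Finite := (hUF (s - n)).subset (fun y hy => ⟨hy.1, hy.2.1⟩)
  have hsd0 := sd_card hpfin hTfin
  have hsd : (pSet n S' (s - (n:ℤ))).ncard + 2 * (pSet n S s ∩ T).ncard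
      = (pSet n S s).ncard + T.ncard := by
    rw [p_move hn hUF hs hsn hS']
    exact hsd0
  refine ⟨hdeep, ?_⟩
  have e1 : (InvS n S).ncard + 2 * T.ncard
      = ((InvS n S').ncard + T.ncard) + 2 * (pSet n S s ∩ T).ncard := by
    rw [d1, d2]
    linarith [hsd]
  calc (-1:ℤ) ^ (InvS n S).ncard
      = (-1) ^ ((InvS n S).ncard + 2 * T.ncard) := (neg_one_pow_add_two_mul _ _).symm
    _ = (-1) ^ (((InvS n S').ncard + T.ncard) + 2 * (pSet n S s ∩ T).ncard) := by rw [e1]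
    _ = (-1) ^ ((InvS n S').ncard + T.ncard) := neg_one_pow_add_two_mul _ _

end Move

section Base

variable {n : ℕ}

lemma upFin_Iio : UpFin (Set.Iio (0:ℤ)) := by
  intro x
  apply (Set.finite_Icc x 0).subset
  rintro y ⟨h1, h2⟩
  exact ⟨le_of_lt h2, le_of_lt h1⟩

lemma phi_Iio (hn : 0 < n) {x : ℤ} (hx : x < 0) : Phi n (Set.Iio 0) x = x := by
  have hnpos : (0:ℤ) < n := by exact_mod_cast hn
  set q := x.ediv n with hq
  have hqneg : q < 0 := Int.ediv_neg_of_neg_of_pos hx hnpos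
  have hxqr : (n:ℤ) * q + x.emod n = x := Int.mul_ediv_add_emod x n
  have hr0 : 0 ≤ x.emod n := Int.emod_nonneg x (by omega)
  have hrn : x.emod n < n := Int.emod_lt_of_pos x hnpos
  have hset : rnkSet n (Set.Iio 0) x = (fun k : ℤ => x + n * k) '' Set.Icc 1 (-q - 1) := by
    ext y
    constructor
    · rintro ⟨hy1, hy2, c, hc⟩
      have hy1 : y < 0 := hy1
      refine ⟨c, ⟨?_, ?_⟩, by dsimp only; omega⟩
      · by_contra h
        have hc0 : c ≤ 0 := by omega
        have : (n:ℤ) * c ≤ 0 := mul_nonpos_of_nonneg_of_nonpos (le_of_lt hnpos) hc0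
        omega
      · by_contra h
        have hc0 : -q ≤ c := by omega
        have h1 : (n:ℤ) * (-q) ≤ n * c := mul_le_mul_of_nonneg_left hc0 (le_of_lt hnpos)
        have h2 : (n:ℤ) * (-q) = -(n * q) := by ring
        omega
    · rintro ⟨k, ⟨hk1, hk2⟩, rfl⟩
      dsimp only
      have h1 : (n:ℤ) * 1 ≤ n * k := mul_le_mul_of_nonneg_left hk1 (le_of_lt hnpos)
      have h2 : (n:ℤ) * k ≤ n * (-q - 1) := mul_le_mul_of_nonneg_left hk2 (le_of_lt hnpos)
      refine ⟨?_, by omega, k, by ring⟩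
      show x + (n:ℤ) * k < 0
      have : (n:ℤ) * (-q - 1) = -(n * q) - n := by ring
      omega
  have hinj : Set.InjOn (fun k : ℤ => x + n * k) (Set.Icc 1 (-q - 1)) := by
    intro a _ b _ hab
    simp only at hab
    have : (n:ℤ) * a = n * b := by omega
    exact mul_left_cancel₀ (by omega) this
  have hcard : (rnkSet n (Set.Iio 0) x).ncard = (-q - 1).toNat := by
    rw [hset, Set.ncard_image_of_injOn hinj, ← Finset.coe_Icc, Set.ncard_coe_finset]
    rw [Int.card_Icc]
    congr 1
    omega
  unfold Phi
  rw [hcard]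
  have : ((-q - 1).toNat : ℤ) = -q - 1 := Int.toNat_of_nonneg (by omega)
  rw [this]
  have : (n:ℤ) * (-q - 1) = -(n * q) - n := by ring
  omega

lemma deepId_Iio (hn : 0 < n) : DeepId n (Set.Iio (0:ℤ)) :=
  ⟨0, fun x hx => ⟨hx, phi_Iio hn hx⟩⟩

lemma inv_Iio (hn : 0 < n) : InvS n (Set.Iio (0:ℤ)) = ∅ := by
  ext ⟨x, y⟩
  simp only [Set.mem_empty_iff_false, iff_false]
  rintro ⟨hx, hy, hlt, hphi⟩
  dsimp only at hx hy hlt hphi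
  rw [phi_Iio hn hx, phi_Iio hn hy] at hphi
  omega

end Base


-- ===== Part 1: border strip structure =====

lemma f_mono (ρ : Ptn) : ∀ {i j : ℕ}, i ≤ j → ρ.f j ≤ ρ.f i := by
  have : Antitone ρ.f := antitone_nat_of_succ_le (fun k => ρ.anti k)
  intro i j h
  exact this h

/-- the beta sequence -/
def bβ (ρ : Ptn) (i : ℕ) : ℤ := (ρ.f i : ℤ) - (i + 1)

lemma bβ_strictAnti (ρ : Ptn) : StrictAnti (bβ ρ) := by
  apply strictAnti_nat_of_succ_lt
  intro k
  have := ρ.anti k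
  unfold bβ
  push_cast
  omega

lemma mem_S_iff (ρ : Ptn) (x : ℤ) : x ∈ ρ.S ↔ ∃ i, x = bβ ρ i := Iff.rfl

lemma upFin_ptn (ρ : Ptn) : SP.UpFin ρ.S := by
  intro x
  have hb : ∀ i : ℕ, (ρ.f i : ℤ) - (i + 1) ≤ ((ρ.f 0 : ℤ) - 1) - i := by
    intro i
    have h1 : ρ.f i ≤ ρ.f 0 := f_mono ρ (Nat.zero_le i)
    push_cast
    omega
  apply Set.Finite.subset ((Set.finite_Iio (bβ ρ 0 - x).toNat).image (bβ ρ))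
  rintro y ⟨⟨i, rfl⟩, hxy⟩
  refine ⟨i, ?_, rfl⟩
  have h2 := hb i
  have h0 : bβ ρ 0 = (ρ.f 0 : ℤ) - 1 := by unfold bβ; push_cast; ring
  simp only [Set.mem_Iio]
  omega

lemma S_zero {ρ : Ptn} (h : ∀ i, ρ.f i = 0) : ρ.S = Set.Iio 0 := by
  ext x
  constructor
  · rintro ⟨i, rfl⟩
    rw [h i]
    simp only [Set.mem_Iio]
    push_cast
    omega
  · intro hx
    simp only [Set.mem_Iio] at hx
    refine ⟨(-x - 1).toNat, ?_⟩
    rw [h]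
    have : ((-x - 1).toNat : ℤ) = -x - 1 := Int.toNat_of_nonneg (by omega)
    push_cast
    omega

lemma adj_row_le {p q : ℕ × ℕ} (h : Adj p q) : q.1 ≤ p.1 + 1 := by
  rcases h with ⟨h1, _⟩ | ⟨_, h2 | h2⟩ <;> omega

/-- every row between the rows of two connected cells is occupied -/
lemma path_rows {D : Set (ℕ × ℕ)} {x y : ℕ × ℕ} (hx : x ∈ D)
    (hpath : Relation.ReflTransGen (fun u v => v ∈ D ∧ Adj u v) x y) :
    ∀ r, x.1 ≤ r → r ≤ y.1 → ∃ s, (r, s) ∈ D := by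
  induction hpath with
  | refl =>
    intro r h1 h2
    have : r = x.1 := le_antisymm h2 h1
    exact ⟨x.2, by rwa [this, Prod.mk.eta]⟩
  | @tail p q hxp hpq ih =>
    intro r h1 h2
    rcases le_or_gt r p.1 with h | h
    · exact ih r h1 h
    · have hq1 : q.1 ≤ p.1 + 1 := adj_row_le hpq.2
      have : r = q.1 := by omega
      exact ⟨q.2, by rw [this, Prod.mk.eta]; exact hpq.1⟩

/-- if vertical crossing between row i and i+1 is blocked, paths stay in rows ≤ i -/
lemma path_stay {D : Set (ℕ × ℕ)} {x : ℕ × ℕ} (hx : x ∈ D) {i : ℕ}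
    (hblock : ∀ s, (i, s) ∈ D → (i + 1, s) ∈ D → False)
    {y : ℕ × ℕ} (hpath : Relation.ReflTransGen (fun u v => v ∈ D ∧ Adj u v) x y)
    (hxi : x.1 ≤ i) : y.1 ≤ i := by
  induction hpath with
  | refl => exact hxi
  | @tail p q hxp hpq ih =>
    have hp : p ∈ D := by
      rcases (Relation.reflTransGen_iff_eq_or_transGen).mp hxp with rfl | htg
      · exact hx
      · rcases Relation.TransGen.tail'_iff.mp htg with ⟨u, _, hu⟩
        exact hu.1
    rcases hpq.2 with ⟨h1, _⟩ | ⟨h2, h3 | h3⟩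
    · omega
    · -- vertical: p.1 + 1 = q.1
      rcases lt_or_eq_of_le ih with h | h
      · omega
      · exfalso
        have hq : q = (p.1 + 1, p.2) := by
          rw [Prod.ext_iff]
          exact ⟨h3.symm, h2.symm⟩
        apply hblock p.2
        · rw [← h, Prod.mk.eta]
          exact hp
        · rw [← h, ← hq]
          exact hpq.1
    · omega

lemma strip_step {n : ℕ} (hn : 0 < n) (lam mu : Ptn)
    (hsub : mu.cells ⊆ lam.cells) (hbs : IsBorderStrip n (lam.cells \ mu.cells)) :
    ∃ s : ℤ, s ∈ lam.S ∧ (s - (n:ℤ)) ∉ lam.S ∧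
      mu.S = insert (s - (n:ℤ)) (lam.S \ {s}) ∧
      htS (lam.cells \ mu.cells) = {y | y ∈ lam.S ∧ s - (n:ℤ) < y ∧ y < s}.ncard := by
  classical
  obtain ⟨hfin, hcard, hconn, hno2⟩ := hbs
  set D := lam.cells \ mu.cells with hD
  -- basic facts
  have hfle : ∀ i, mu.f i ≤ lam.f i := by
    intro i
    by_cases h : mu.f i = 0
    · omega
    · have : (i, mu.f i - 1) ∈ mu.cells := by
        show mu.f i - 1 < mu.f i
        omega
      have := hsub this
      have : mu.f i - 1 < lam.f i := this
      omega
  have hmemD : ∀ p : ℕ × ℕ, p ∈ D ↔ (mu.f p.1 ≤ p.2 ∧ p.2 < lam.f p.1) := by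
    intro p
    constructor
    · rintro ⟨h1, h2⟩
      exact ⟨by simpa [Ptn.cells] using h2, h1⟩
    · rintro ⟨h1, h2⟩
      exact ⟨h2, by simp [Ptn.cells]; omega⟩
  have hDne : D.Nonempty := by
    rw [← Set.ncard_pos hfin] at *
    omega
  -- the set of occupied rows
  have hrow : ∀ i : ℕ, (∃ s, (i, s) ∈ D) ↔ mu.f i < lam.f i := by
    intro i
    constructor
    · rintro ⟨s, hs⟩
      have h := (hmemD (i, s)).mp hs
      dsimp only at h
      omega
    · intro h
      exact ⟨mu.f i, (hmemD (i, mu.f i)).mpr ⟨le_refl _, h⟩⟩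
  have hRfin : {i : ℕ | mu.f i < lam.f i}.Finite := by
    obtain ⟨N, hN⟩ := lam.ev
    apply (Set.finite_Iio N).subset
    intro i hi
    simp only [Set.mem_Iio]
    by_contra h
    have := hN i (by omega)
    have := hfle i
    simp only [Set.mem_setOf_eq] at hi
    omega
  have hRne : {i : ℕ | mu.f i < lam.f i}.Nonempty := by
    obtain ⟨⟨i, j⟩, hp⟩ := hDne
    have h := (hmemD (i, j)).mp hp
    dsimp only at h
    exact ⟨i, by simp only [Set.mem_setOf_eq]; omega⟩
  set RF : Finset ℕ := hRfin.toFinset with hRF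
  have hRFne : RF.Nonempty := by
    rwa [hRF, Set.Finite.toFinset_nonempty]
  set a := RF.min' hRFne with haa
  set b := RF.max' hRFne with hbb
  have hmemRF : ∀ i, i ∈ RF ↔ mu.f i < lam.f i := by
    intro i
    rw [hRF, Set.Finite.mem_toFinset]
    rfl
  have haR : mu.f a < lam.f a := (hmemRF a).mp (RF.min'_mem hRFne)
  have hbR : mu.f b < lam.f b := (hmemRF b).mp (RF.max'_mem hRFne)
  have hab : a ≤ b := RF.min'_le b (RF.max'_mem hRFne)
  have hbounds : ∀ i, mu.f i < lam.f i → a ≤ i ∧ i ≤ b := by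
    intro i hi
    exact ⟨RF.min'_le i ((hmemRF i).mpr hi), RF.le_max' i ((hmemRF i).mpr hi)⟩
  have hcell : ∀ i j, mu.f i ≤ j → j < lam.f i → ((i, j) : ℕ × ℕ) ∈ D :=
    fun i j h1 h2 => (hmemD (i, j)).mpr ⟨h1, h2⟩
  -- interval property
  have hinterval : ∀ i, a ≤ i → i ≤ b → mu.f i < lam.f i := by
    intro i h1 h2
    have hxa : ((a, mu.f a) : ℕ × ℕ) ∈ D := hcell a _ (le_refl _) haR
    have hxb : ((b, mu.f b) : ℕ × ℕ) ∈ D := hcell b _ (le_refl _) hbR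
    have hpath := hconn _ hxa _ hxb
    obtain ⟨s, hs⟩ := path_rows hxa hpath i h1 h2
    exact ((hrow i).mp ⟨s, hs⟩)
  -- adjacent rows: lam.f (i+1) = mu.f i + 1 for a ≤ i < b
  have hadj : ∀ i, a ≤ i → i < b → lam.f (i + 1) = mu.f i + 1 := by
    intro i h1 h2
    have hiR : mu.f i < lam.f i := hinterval i h1 (by omega)
    have hi1R : mu.f (i + 1) < lam.f (i + 1) := hinterval (i + 1) (by omega) (by omega)
    have hle : lam.f (i + 1) ≤ mu.f i + 1 := by
      by_contra h
      apply hno2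
      refine ⟨i, mu.f i, ?_, ?_, ?_, ?_⟩
      · exact hcell i _ (le_refl _) hiR
      · exact hcell (i + 1) _ (mu.anti i) (by omega)
      · exact hcell i _ (by omega) (by have := lam.anti i; omega)
      · exact hcell (i + 1) _ (by have := mu.anti i; omega) (by omega)
    have hge : mu.f i < lam.f (i + 1) := by
      by_contra h
      push_neg at h
      have hxa : ((i, mu.f i) : ℕ × ℕ) ∈ D := hcell i _ (le_refl _) hiR
      have hxb : ((i + 1, mu.f (i + 1)) : ℕ × ℕ) ∈ D := hcell (i + 1) _ (le_refl _) hi1R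
      have hpath := hconn _ hxa _ hxb
      have hblock : ∀ s, (i, s) ∈ D → (i + 1, s) ∈ D → False := by
        intro s hs1 hs2
        have e1 := (hmemD _).mp hs1
        have e2 := (hmemD _).mp hs2
        dsimp only at e1 e2
        omega
      have := path_stay hxa hblock hpath (le_refl i)
      dsimp only at this
      omega
    omega
  have houter : ∀ i, (i < a ∨ b < i) → mu.f i = lam.f i := by
    intro i hi
    have h := hfle i
    rcases Nat.lt_or_ge (mu.f i) (lam.f i) with h2 | h2
    · obtain ⟨h3, h4⟩ := hbounds i h2
      omega
    · omega
  -- cardinality: n = sum over rows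
  have hsum : ∑ i ∈ Finset.Icc a b, (lam.f i - mu.f i) = n := by
    have hDf : D = ↑((Finset.Icc a b).biUnion
        (fun i => (Finset.Ico (mu.f i) (lam.f i)).image (fun j => (i, j)))) := by
      ext ⟨i, j⟩
      rw [hmemD]
      simp only [Finset.coe_biUnion, Set.mem_iUnion, Finset.mem_coe, Finset.mem_biUnion,
        Finset.mem_image, Finset.mem_Ico, Finset.mem_Icc]
      constructor
      · rintro ⟨h1, h2⟩
        obtain ⟨h3, h4⟩ := hbounds i (by omega)
        exact ⟨i, ⟨h3, h4⟩, j, ⟨h1, h2⟩, rfl⟩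
      · rintro ⟨i', ⟨h3, h4⟩, j', ⟨h5, h6⟩, heq⟩
        cases heq
        exact ⟨h5, h6⟩
    have hcardD : D.ncard = ∑ i ∈ Finset.Icc a b, (lam.f i - mu.f i) := by
      rw [hDf, Set.ncard_coe_finset]
      rw [Finset.card_biUnion]
      · apply Finset.sum_congr rfl
        intro i _
        rw [Finset.card_image_of_injective _ (fun j k hjk => by
          have := (Prod.mk.injEq i j i k).mp hjk
          exact this.2)]
        exact Nat.card_Ico _ _
      · intro x hx y hy hxy
        apply Finset.disjoint_left.mpr
        rintro p hp1 hp2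
        apply hxy
        obtain ⟨j1, _, h1⟩ := Finset.mem_image.mp hp1
        obtain ⟨j2, _, h2⟩ := Finset.mem_image.mp hp2
        have e1 : p.1 = x := by rw [← h1]
        have e2 : p.1 = y := by rw [← h2]
        omega
    omega
  -- value of mu.f b
  have hsumZ : ∑ i ∈ Finset.Icc a b, ((lam.f i : ℤ) - mu.f i) = (n : ℤ) := by
    have h1 : ((∑ i ∈ Finset.Icc a b, (lam.f i - mu.f i) : ℕ) : ℤ) = (n : ℤ) := by
      exact_mod_cast congrArg (fun t : ℕ => (t : ℤ)) hsum
    rw [← h1, Nat.cast_sum]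
    apply Finset.sum_congr rfl
    intro i _
    have := hfle i
    push_cast [Nat.cast_sub this]
    ring
  have htel : ∀ t, a ≤ t → t ≤ b →
      ∑ i ∈ Finset.Icc a t, ((lam.f i : ℤ) - mu.f i)
        = (lam.f a : ℤ) - mu.f t + ((t : ℤ) - a) := by
    intro t
    induction t with
    | zero =>
      intro h1 h2
      have ha0 : a = 0 := by omega
      rw [ha0, Finset.Icc_self, Finset.sum_singleton]
      push_cast
      ring
    | succ t ih =>
      intro h1 h2
      rcases Nat.lt_or_ge t a with h | h
      · have ha1 : a = t + 1 := by omega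
        rw [ha1, Finset.Icc_self, Finset.sum_singleton]
        push_cast
        ring
      · rw [Finset.sum_Icc_succ_top (by omega : a ≤ t + 1), ih h (by omega)]
        have hadjt := hadj t h (by omega)
        have : (lam.f (t + 1) : ℤ) = (mu.f t : ℤ) + 1 := by exact_mod_cast hadjt
        push_cast
        omega
  have hmub : (mu.f b : ℤ) = (lam.f a : ℤ) + b - a - n := by
    have h1 := htel b hab (le_refl b)
    rw [hsumZ] at h1
    omega
  -- beta facts
  set sβ : ℤ := (lam.f a : ℤ) - (a + 1) with hsβ
  have hsβa : sβ = bβ lam a := rfl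
  have hbmu_out : ∀ i, i < a ∨ b < i → bβ mu i = bβ lam i := by
    intro i hi
    unfold bβ
    rw [houter i hi]
  have hbmu_mid : ∀ i, a ≤ i → i < b → bβ mu i = bβ lam (i + 1) := by
    intro i h1 h2
    have hadji := hadj i h1 h2
    unfold bβ
    have : (lam.f (i + 1) : ℤ) = (mu.f i : ℤ) + 1 := by exact_mod_cast hadji
    push_cast
    omega
  have hbmu_b : bβ mu b = sβ - n := by
    unfold bβ
    rw [hsβ]
    omega
  have hanti := bβ_strictAnti lam
  have hlow : bβ lam (b + 1) < sβ - n := by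
    have h1 : lam.f (b + 1) = mu.f (b + 1) := (houter (b + 1) (Or.inr (by omega))).symm
    have h2 : mu.f (b + 1) ≤ mu.f b := mu.anti b
    have h3 : (lam.f (b + 1) : ℤ) ≤ (mu.f b : ℤ) := by exact_mod_cast h1 ▸ h2
    unfold bβ
    rw [hsβ]
    push_cast
    omega
  have hhigh : sβ - n < bβ lam b := by
    have : (mu.f b : ℤ) < (lam.f b : ℤ) := by exact_mod_cast hbR
    unfold bβ
    rw [hsβ]
    push_cast
    omega
  have hnotmem : sβ - (n : ℤ) ∉ lam.S := by
    rintro ⟨j, hj⟩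
    have hj2 : sβ - n = bβ lam j := hj
    rcases Nat.lt_or_ge j (b + 1) with h | h
    · have : bβ lam b ≤ bβ lam j := hanti.antitone (by omega)
      omega
    · have : bβ lam j ≤ bβ lam (b + 1) := hanti.antitone h
      omega
  have hsmem : sβ ∈ lam.S := ⟨a, rfl⟩
  -- the set relation
  have hSmu : mu.S = insert (sβ - (n : ℤ)) (lam.S \ {sβ}) := by
    ext x
    constructor
    · rintro ⟨i, hx⟩
      have hx : x = bβ mu i := hx
      rcases Nat.lt_or_ge i a with h | h
      · have hxv : x = bβ lam i := by rw [hx, hbmu_out i (Or.inl h)]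
        apply Set.mem_insert_of_mem
        refine ⟨⟨i, hxv⟩, ?_⟩
        simp only [Set.mem_singleton_iff]
        rw [hxv, hsβa]
        intro heq
        exact absurd (hanti.injective heq) (by omega)
      · rcases Nat.lt_or_ge i b with h2 | h2
        · have hxv : x = bβ lam (i + 1) := by rw [hx, hbmu_mid i h h2]
          apply Set.mem_insert_of_mem
          refine ⟨⟨i + 1, hxv⟩, ?_⟩
          simp only [Set.mem_singleton_iff]
          rw [hxv, hsβa]
          intro heq
          exact absurd (hanti.injective heq) (by omega)
        · rcases Nat.lt_or_ge b i with h3 | h3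
          · have hxv : x = bβ lam i := by rw [hx, hbmu_out i (Or.inr h3)]
            apply Set.mem_insert_of_mem
            refine ⟨⟨i, hxv⟩, ?_⟩
            simp only [Set.mem_singleton_iff]
            rw [hxv, hsβa]
            intro heq
            exact absurd (hanti.injective heq) (by omega)
          · have hib : i = b := by omega
            rw [hx, hib, hbmu_b]
            exact Set.mem_insert _ _
    · rintro (rfl | ⟨⟨j, hx⟩, hne⟩)
      · exact ⟨b, hbmu_b.symm⟩
      · have hx : x = bβ lam j := hx
        simp only [Set.mem_singleton_iff] at hne
        have hja : j ≠ a := by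
          rintro rfl
          exact hne (by rw [hx, hsβa])
        rcases Nat.lt_or_ge j a with h | h
        · exact ⟨j, by show x = bβ mu j; rw [hbmu_out j (Or.inl h)]; exact hx⟩
        · rcases Nat.lt_or_ge b j with h2 | h2
          · exact ⟨j, by show x = bβ mu j; rw [hbmu_out j (Or.inr h2)]; exact hx⟩
          · have : a < j := by omega
            obtain ⟨i, rfl⟩ : ∃ i, j = i + 1 := ⟨j - 1, by omega⟩
            exact ⟨i, by show x = bβ mu i; rw [hbmu_mid i (by omega) (by omega)]; exact hx⟩
  -- the between-count
  have hTset : {y | y ∈ lam.S ∧ sβ - (n : ℤ) < y ∧ y < sβ}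
      = bβ lam '' Set.Icc (a + 1) b := by
    ext y
    constructor
    · rintro ⟨⟨j, hy⟩, h1, h2⟩
      have hy : y = bβ lam j := hy
      refine ⟨j, ⟨?_, ?_⟩, hy.symm⟩
      · by_contra h
        have : bβ lam a ≤ bβ lam j := hanti.antitone (by omega)
        rw [← hsβa] at this
        omega
      · by_contra h
        have : bβ lam j ≤ bβ lam (b + 1) := hanti.antitone (by omega)
        omega
    · rintro ⟨j, ⟨h1, h2⟩, rfl⟩
      refine ⟨⟨j, rfl⟩, ?_, ?_⟩
      · have : bβ lam b ≤ bβ lam j := hanti.antitone h2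
        omega
      · have : bβ lam j < bβ lam a := hanti (by omega)
        rw [← hsβa] at this
        omega
  have hTcard : {y | y ∈ lam.S ∧ sβ - (n : ℤ) < y ∧ y < sβ}.ncard = b - a := by
    rw [hTset, Set.ncard_image_of_injOn (hanti.injective.injOn)]
    rw [← Finset.coe_Icc, Set.ncard_coe_finset, Nat.card_Icc]
    omega
  -- the height
  have hht : htS D = b - a := by
    have hrows : {r | ∃ s, (r, s) ∈ D} = Set.Icc a b := by
      ext r
      constructor
      · intro hr
        have := (hrow r).mp hr
        exact hbounds r this
      · intro hr
        simp only [Set.mem_Icc] at hr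
        exact (hrow r).mpr (hinterval r hr.1 hr.2)
    unfold htS
    rw [hrows, ← Finset.coe_Icc, Set.ncard_coe_finset, Nat.card_Icc]
    omega
  exact ⟨sβ, hsmem, hnotmem, hSmu, by rw [hht, hTcard]⟩


lemma decomp_aux {n : ℕ} (hn : 0 < n) (m : ℕ) (c : ℕ → Ptn)
    (hlast : ∀ i, (c m).f i = 0)
    (hstep : ∀ t, t < m → (c (t + 1)).cells ⊆ (c t).cells ∧
      IsBorderStrip n ((c t).cells \ (c (t + 1)).cells)) :
    ∀ k, k ≤ m → SP.DeepId n ((c (m - k)).S) ∧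
      ((-1:ℤ) ^ (∑ t ∈ Finset.Ico (m - k) m, htS ((c t).cells \ (c (t + 1)).cells))
        = (-1) ^ (SP.InvS n ((c (m - k)).S)).ncard) := by
  intro k
  induction k with
  | zero =>
    intro _
    rw [Nat.sub_zero]
    constructor
    · rw [S_zero hlast]
      exact deepId_Iio hn
    · rw [Finset.Ico_self, Finset.sum_empty, S_zero hlast, inv_Iio hn]
      simp
  | succ k ih =>
    intro hk
    have hk' : k ≤ m := by omega
    obtain ⟨hdeep', hsign⟩ := ih hk'
    have hmk : m - k = (m - (k + 1)) + 1 := by omega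
    rw [hmk] at hdeep' hsign
    set t0 := m - (k + 1) with ht0
    have ht0m : t0 < m := by omega
    obtain ⟨hsub, hbs⟩ := hstep t0 ht0m
    obtain ⟨s, hs, hsn, hS', hht⟩ := strip_step hn (c t0) (c (t0 + 1)) hsub hbs
    have hUF := upFin_ptn (c t0)
    obtain ⟨hdeep, hparity⟩ := SP.move_parity hn hUF hdeep' hs hsn hS'
    refine ⟨hdeep, ?_⟩
    rw [Finset.sum_eq_sum_Ico_succ_bot ht0m]
    rw [hht, pow_add, hsign, hparity, pow_add, mul_comm]

end SP

/-- for a balanced `n`-colored partition `Λ`, the sign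
`(−1)^{Σ ht(ν_i)}` is independent of the chosen decomposition into `n`-border strips. -/
theorem strip_decomposition_sign_well_defined (n : ℕ) (hn : 0 < n) (Λ : Ptn)
    (hbal : BalancedPtn n Λ) (m₁ m₂ : ℕ) (c₁ c₂ : ℕ → Ptn)
    (h₁ : StripDecomp n Λ m₁ c₁) (h₂ : StripDecomp n Λ m₂ c₂) :
    (-1 : ℤ) ^ (∑ t ∈ Finset.range m₁, htS ((c₁ t).cells \ (c₁ (t + 1)).cells))
      = (-1 : ℤ) ^ (∑ t ∈ Finset.range m₂, htS ((c₂ t).cells \ (c₂ (t + 1)).cells)) := by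
  obtain ⟨hc0₁, hcm₁, hstep₁⟩ := h₁
  obtain ⟨hc0₂, hcm₂, hstep₂⟩ := h₂
  have e₁ := (SP.decomp_aux hn m₁ c₁ hcm₁ hstep₁ m₁ le_rfl).2
  have e₂ := (SP.decomp_aux hn m₂ c₂ hcm₂ hstep₂ m₂ le_rfl).2
  rw [Nat.sub_self, hc0₁] at e₁
  rw [Nat.sub_self, hc0₂] at e₂
  rw [Finset.range_eq_Ico, e₁, Finset.range_eq_Ico, e₂]
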